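/- Under the pseudo-regression setup, assume additionally that |v(z)| ≤ A for μ-almost every z, that E[(V⁽¹⁾ − v(U⁽¹⁾))² | U⁽¹⁾] ≤ σ² almost surely, and that λmin‖x‖² ≤ xᵀGx ≤ λmax‖x‖² for all x ∈ ℝᴷ with 0 < λmin ≤ λmax. Set α_k := ∫ ψ_k v dμ and v^K := Σ_{k=1}^{K} (G⁻¹α)_k ψ_k. Then E[∫_{ℝⁿ} |ṽ(z) − v^K(z)|² μ(dz)] ≤ (1/λmin)·Σ_{k=1}^{K} Var[((1/M)·𝕄ᵀ𝕐)_k] ≤ (σ² + A²)·λmax·K/(λmin·M). -/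

import Mathlib

open MeasureTheory ProbabilityTheory Matrix
open scoped ENNReal

lemma aux_integrable_mul {α : Type*} [MeasurableSpace α] {μ : Measure α} {f g : α → ℝ}
    (hf : MemLp f 2 μ) (hg : MemLp g 2 μ) : Integrable (fun x => f x * g x) μ := by
  have h : MemLp (f • g) 1 μ := hg.smul hf (hpqr := ⟨by rw [inv_one, ENNReal.inv_two_add_inv_two]⟩)
  exact memLp_one_iff_integrable.mp h

lemma aux_quad {K : ℕ} (G : Matrix (Fin K) (Fin K) ℝ) (lmin : ℝ) (hlmin : 0 < lmin)
    (hlow : ∀ y : Fin K → ℝ, lmin * ∑ k, (y k)^2 ≤ y ⬝ᵥ G.mulVec y) (y : Fin K → ℝ) :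
    y ⬝ᵥ G.mulVec y ≤ lmin⁻¹ * ∑ k, ((G.mulVec y) k)^2 := by
  set B := G - lmin • (1 : Matrix (Fin K) (Fin K) ℝ) with hB
  have hBy : G.mulVec y = lmin • y + B.mulVec y := by
    simp [hB, Matrix.sub_mulVec, Matrix.smul_mulVec, Matrix.one_mulVec]
  have h1 : ∑ k, ((G.mulVec y) k)^2 = (G.mulVec y) ⬝ᵥ (G.mulVec y) := by
    simp [dotProduct, sq]
  have hyy : y ⬝ᵥ y = ∑ k, (y k)^2 := by simp [dotProduct, sq]
  have hyBy : 0 ≤ y ⬝ᵥ B.mulVec y := by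
    have h2 : y ⬝ᵥ B.mulVec y = y ⬝ᵥ G.mulVec y - lmin * ∑ k, (y k)^2 := by
      simp [hB, Matrix.sub_mulVec, dotProduct_sub, Matrix.smul_mulVec,
        Matrix.one_mulVec, dotProduct_smul, smul_eq_mul, hyy]
    have := hlow y
    linarith
  have hcomm : (B.mulVec y) ⬝ᵥ y = y ⬝ᵥ B.mulVec y := dotProduct_comm _ _
  have hBB : 0 ≤ (B.mulVec y) ⬝ᵥ (B.mulVec y) := by
    simp only [dotProduct]
    exact Finset.sum_nonneg fun _ _ => mul_self_nonneg _
  have e1 : (G.mulVec y) ⬝ᵥ (G.mulVec y)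
      = lmin*lmin*(y ⬝ᵥ y) + lmin*(y ⬝ᵥ B.mulVec y) + lmin*((B.mulVec y) ⬝ᵥ y)
        + (B.mulVec y) ⬝ᵥ (B.mulVec y) := by
    rw [hBy]
    simp [add_dotProduct, dotProduct_add, smul_dotProduct, dotProduct_smul, smul_eq_mul]
    ring
  have e2 : y ⬝ᵥ G.mulVec y = lmin*(y ⬝ᵥ y) + y ⬝ᵥ B.mulVec y := by
    rw [hBy]
    simp [dotProduct_add, dotProduct_smul, smul_eq_mul]
  have key : lmin * (y ⬝ᵥ G.mulVec y) ≤ (G.mulVec y) ⬝ᵥ (G.mulVec y) := by nlinarith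
  rw [h1]
  have h3 := mul_le_mul_of_nonneg_left key (inv_nonneg.mpr hlmin.le)
  rwa [← mul_assoc, inv_mul_cancel₀ hlmin.ne', one_mul] at h3

lemma aux_gram {n K : ℕ} (μ : Measure (Fin n → ℝ)) [IsProbabilityMeasure μ]
    (ψ : Fin K → (Fin n → ℝ) → ℝ) (hψL2 : ∀ k, MemLp (ψ k) 2 μ)
    (G : Matrix (Fin K) (Fin K) ℝ) (hGdef : ∀ k l, G k l = ∫ z, ψ k z * ψ l z ∂μ)
    (d : Fin K → ℝ) : ∫ z, (∑ k, d k * ψ k z)^2 ∂μ = d ⬝ᵥ G.mulVec d := by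
  have hint : ∀ k l : Fin K, Integrable (fun z => ψ k z * ψ l z) μ :=
    fun k l => aux_integrable_mul (hψL2 k) (hψL2 l)
  have h1 : ∀ z, (∑ k, d k * ψ k z)^2 = ∑ k, ∑ l, (d k * d l) * (ψ k z * ψ l z) := by
    intro z
    rw [sq, Finset.sum_mul_sum]
    exact Finset.sum_congr rfl fun k _ => Finset.sum_congr rfl fun l _ => by ring
  simp_rw [h1]
  rw [integral_finset_sum _ (fun k _ =>
    integrable_finset_sum _ (fun l _ => (hint k l).const_mul _))]
  have h2 : ∀ k : Fin K, ∫ z, ∑ l, (d k * d l) * (ψ k z * ψ l z) ∂μ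
      = ∑ l, (d k * d l) * G k l := by
    intro k
    rw [integral_finset_sum _ (fun l _ => (hint k l).const_mul _)]
    exact Finset.sum_congr rfl fun l _ => by rw [integral_const_mul, hGdef]
  simp_rw [h2]
  simp only [dotProduct, Matrix.mulVec, Finset.mul_sum]
  exact Finset.sum_congr rfl fun k _ => Finset.sum_congr rfl fun l _ => by ring

lemma aux_cross_zero {Ω : Type*} [inst : MeasurableSpace Ω] {P : Measure Ω} [IsProbabilityMeasure P]
    {m' : MeasurableSpace Ω} (hm : m' ≤ inst) {f h : Ω → ℝ}
    (hf_m : StronglyMeasurable[m'] f) (hfh_int : Integrable (fun ω => f ω * h ω) P)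
    (hh_int : Integrable h P) (hcond : P[h|m'] =ᵐ[P] 0) :
    ∫ ω, f ω * h ω ∂P = 0 := by
  have pull : P[(fun ω => f ω * h ω)|m'] =ᵐ[P] f * P[h|m'] :=
    condExp_mul_of_stronglyMeasurable_left hf_m hfh_int hh_int
  have pull2 : P[(fun ω => f ω * h ω)|m'] =ᵐ[P] fun _ => (0:ℝ) := by
    filter_upwards [pull, hcond] with ω h1 h2
    simp [h1, Pi.mul_apply, h2]
  rw [← integral_condExp hm, integral_congr_ae pull2, integral_const, smul_zero]

lemma aux_condexp_bound {Ω : Type*} [inst : MeasurableSpace Ω] {P : Measure Ω}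
    [IsProbabilityMeasure P]
    {m' : MeasurableSpace Ω} (hm : m' ≤ inst) {s g : Ω → ℝ} {c : ℝ} (hc : 0 ≤ c)
    (hs_m : Measurable[m'] s) (hs_meas : Measurable[inst] s) (hs_nonneg : ∀ ω, 0 ≤ s ω)
    (hs_int : Integrable s P)
    (hg_meas : Measurable[inst] g) (hg_nonneg : ∀ ω, 0 ≤ g ω) (hg_int : Integrable g P)
    (hσ : ∀ᵐ ω ∂P, (P[g|m']) ω ≤ c) :
    Integrable (fun ω => s ω * g ω) P ∧ ∫ ω, s ω * g ω ∂P ≤ c * ∫ ω, s ω ∂P := by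
  -- truncations
  set f : ℕ → Ω → ℝ := fun N ω => min (s ω) (N : ℝ) with hf
  have hf_nonneg : ∀ N ω, 0 ≤ f N ω := fun N ω => le_min (hs_nonneg ω) (Nat.cast_nonneg N)
  have hf_le_s : ∀ N ω, f N ω ≤ s ω := fun N ω => min_le_left _ _
  have hf_m' : ∀ N, StronglyMeasurable[m'] (f N) :=
    fun N => (hs_m.min (@measurable_const ℝ Ω _ m' _)).stronglyMeasurable
  have hf_meas : ∀ N, Measurable[inst] (f N) := fun N => hs_meas.min measurable_const
  have hf_int : ∀ N, Integrable (f N) P := fun N =>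
    hs_int.mono ((hf_meas N).aestronglyMeasurable (μ := P)) (Filter.Eventually.of_forall fun ω => by
      rw [Real.norm_eq_abs, Real.norm_eq_abs, abs_of_nonneg (hf_nonneg N ω),
        abs_of_nonneg (hs_nonneg ω)]
      exact hf_le_s N ω)
  have hfg_int : ∀ N, Integrable (fun ω => f N ω * g ω) P := fun N =>
    hg_int.bdd_mul (hf_meas N).aestronglyMeasurable
      (c := (N : ℝ)) (Filter.Eventually.of_forall fun ω => by
        rw [Real.norm_eq_abs, abs_of_nonneg (hf_nonneg N ω)]; exact min_le_right _ _)
  -- the truncated bound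
  have hstep : ∀ N, ∫ ω, f N ω * g ω ∂P ≤ c * ∫ ω, s ω ∂P := by
    intro N
    have pull : P[(fun ω => f N ω * g ω)|m'] =ᵐ[P] fun ω => f N ω * (P[g|m']) ω := by
      filter_upwards [condExp_mul_of_stronglyMeasurable_left (hf_m' N) (hfg_int N) hg_int] with ω hω
      exact hω
    have hEint : Integrable (fun ω => f N ω * (P[g|m']) ω) P :=
      integrable_condExp.bdd_mul (hf_meas N).aestronglyMeasurable
        (c := (N : ℝ)) (Filter.Eventually.of_forall fun ω => by
          rw [Real.norm_eq_abs, abs_of_nonneg (hf_nonneg N ω)]; exact min_le_right _ _)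
    calc ∫ ω, f N ω * g ω ∂P = ∫ ω, (P[(fun ω => f N ω * g ω)|m']) ω ∂P :=
          (integral_condExp hm).symm
      _ = ∫ ω, f N ω * (P[g|m']) ω ∂P := integral_congr_ae pull
      _ ≤ ∫ ω, c * s ω ∂P := by
          refine integral_mono_ae hEint (hs_int.const_mul c) ?_
          filter_upwards [hσ] with ω hω
          calc f N ω * (P[g|m']) ω ≤ f N ω * c :=
                mul_le_mul_of_nonneg_left hω (hf_nonneg N ω)
            _ ≤ s ω * c := mul_le_mul_of_nonneg_right (hf_le_s N ω) hc
            _ = c * s ω := mul_comm _ _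
      _ = c * ∫ ω, s ω ∂P := integral_const_mul c s
  -- monotone convergence
  set F : ℕ → Ω → ℝ≥0∞ := fun N ω => ENNReal.ofReal (f N ω * g ω) with hF
  have hF_meas : ∀ N, Measurable[inst] (F N) := fun N => ((hf_meas N).mul hg_meas).ennreal_ofReal
  have hF_mono : Monotone F := by
    intro N N' hNN' ω
    exact ENNReal.ofReal_le_ofReal (mul_le_mul_of_nonneg_right
      (min_le_min le_rfl (Nat.cast_le.mpr hNN')) (hg_nonneg ω))
  have hsup : ∀ ω, ⨆ N, F N ω = ENNReal.ofReal (s ω * g ω) := by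
    intro ω
    refine le_antisymm (iSup_le fun N => ENNReal.ofReal_le_ofReal
      (mul_le_mul_of_nonneg_right (hf_le_s N ω) (hg_nonneg ω))) ?_
    refine le_iSup_of_le ⌈s ω⌉₊ (le_of_eq ?_)
    rw [hF]
    simp only [hf]
    rw [min_eq_left (Nat.le_ceil _)]
  have hlin : ∫⁻ ω, ENNReal.ofReal (s ω * g ω) ∂P ≤ ENNReal.ofReal (c * ∫ ω, s ω ∂P) := by
    have h1 : ∫⁻ ω, ENNReal.ofReal (s ω * g ω) ∂P = ⨆ N, ∫⁻ ω, F N ω ∂P := by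
      rw [← lintegral_iSup hF_meas hF_mono]
      exact lintegral_congr fun ω => (hsup ω).symm
    rw [h1]
    refine iSup_le fun N => ?_
    rw [← ofReal_integral_eq_lintegral_ofReal (hfg_int N)
      (Filter.Eventually.of_forall fun ω => mul_nonneg (hf_nonneg N ω) (hg_nonneg ω))]
    exact ENNReal.ofReal_le_ofReal (hstep N)
  have hint : Integrable (fun ω => s ω * g ω) P := by
    refine ⟨(hs_meas.mul hg_meas).aestronglyMeasurable, ?_⟩
    rw [hasFiniteIntegral_iff_ofReal (Filter.Eventually.of_forall fun ω =>
      mul_nonneg (hs_nonneg ω) (hg_nonneg ω))]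
    exact hlin.trans_lt ENNReal.ofReal_lt_top
  refine ⟨hint, ?_⟩
  rw [← ENNReal.ofReal_le_ofReal_iff (mul_nonneg hc (integral_nonneg hs_nonneg)),
    ofReal_integral_eq_lintegral_ofReal hint (Filter.Eventually.of_forall fun ω =>
      mul_nonneg (hs_nonneg ω) (hg_nonneg ω))]
  exact hlin


/-- the estimation-error (variance) part of the
pseudo-regression error bound:
`E[∫ |ṽ − v^K|² dμ] ≤ (1/λmin)·Σ_k Var[((1/M)𝕄ᵀ𝕐)_k] ≤ (σ²+A²)·λmax·K/(λmin·M)`. -/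
theorem pseudo_regression_variance_part_bound
    (n K M : ℕ) (hn : 0 < n) (hK : 0 < K) (hM : 0 < M)
    (μ : Measure (Fin n → ℝ)) [IsProbabilityMeasure μ]
    (ψ : Fin K → (Fin n → ℝ) → ℝ)
    (hψmeas : ∀ k, Measurable (ψ k))
    (hψL2 : ∀ k, MemLp (ψ k) 2 μ)
    (G : Matrix (Fin K) (Fin K) ℝ)
    (hGdef : ∀ k l, G k l = ∫ z, ψ k z * ψ l z ∂μ)
    (hGinv : IsUnit G.det)
    (Ω : Type*) [MeasurableSpace Ω] (P : Measure Ω) [IsProbabilityMeasure P]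
    (U : Fin M → Ω → (Fin n → ℝ)) (V : Fin M → Ω → ℝ)
    (hUmeas : ∀ m, Measurable (U m)) (hVmeas : ∀ m, Measurable (V m))
    (hindep : iIndepFun (fun m ω => (U m ω, V m ω)) P)
    (hident : ∀ m, IdentDistrib (fun ω => (U m ω, V m ω))
      (fun ω => (U ⟨0, hM⟩ ω, V ⟨0, hM⟩ ω)) P P)
    (hlaw : Measure.map (U ⟨0, hM⟩) P = μ)
    (hVL2 : MemLp (V ⟨0, hM⟩) 2 P)
    (v : (Fin n → ℝ) → ℝ) (hvmeas : Measurable v)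
    (hcond : P[(fun ω => V ⟨0, hM⟩ ω) |
        MeasurableSpace.comap (U ⟨0, hM⟩) inferInstance]
      =ᵐ[P] fun ω => v (U ⟨0, hM⟩ ω))
    (A σ lmin lmax : ℝ)
    -- |v| ≤ A μ-a.e.
    (hA : ∀ᵐ z ∂μ, |v z| ≤ A)
    -- conditional variance bound E[(V⁽¹⁾ - v(U⁽¹⁾))² | U⁽¹⁾] ≤ σ² a.s.
    (hσ : ∀ᵐ ω ∂P, (P[(fun ω' => (V ⟨0, hM⟩ ω' - v (U ⟨0, hM⟩ ω'))^2) |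
        MeasurableSpace.comap (U ⟨0, hM⟩) inferInstance]) ω ≤ σ^2)
    (hlmin : 0 < lmin) (hminmax : lmin ≤ lmax)
    -- eigenvalue bounds for the Gram matrix: λmin‖x‖² ≤ xᵀGx ≤ λmax‖x‖²
    (hquad : ∀ x : Fin K → ℝ,
      lmin * ∑ k, (x k)^2 ≤ x ⬝ᵥ G.mulVec x ∧ x ⬝ᵥ G.mulVec x ≤ lmax * ∑ k, (x k)^2)
    -- projection coefficients α and projection v^K
    (α : Fin K → ℝ) (hα : ∀ k, α k = ∫ z, ψ k z * v z ∂μ)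
    (vK : (Fin n → ℝ) → ℝ)
    (hvK : ∀ z, vK z = ∑ k, G⁻¹.mulVec α k * ψ k z)
    -- pseudo-regression coefficients and estimator
    (γ : Ω → Fin K → ℝ)
    (hγ : ∀ ω, γ ω = (M : ℝ)⁻¹ • G⁻¹.mulVec (fun k => ∑ m, ψ k (U m ω) * V m ω))
    (vtil : Ω → (Fin n → ℝ) → ℝ)
    (hvtil : ∀ ω z, vtil ω z = ∑ k, γ ω k * ψ k z) :
    ∫ ω, (∫ z, (vtil ω z - vK z)^2 ∂μ) ∂P
        ≤ lmin⁻¹ * ∑ k : Fin K,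
            variance (fun ω => (M : ℝ)⁻¹ * ∑ m, ψ k (U m ω) * V m ω) P
      ∧ lmin⁻¹ * ∑ k : Fin K,
            variance (fun ω => (M : ℝ)⁻¹ * ∑ m, ψ k (U m ω) * V m ω) P
        ≤ (σ^2 + A^2) * lmax * K / (lmin * M) := by
  have hMpos : (0:ℝ) < M := Nat.cast_pos.mpr hM
  have hMne : (M:ℝ) ≠ 0 := hMpos.ne'
  have hU0 : Measurable (U ⟨0, hM⟩) := hUmeas _
  have hV0 : Measurable (V ⟨0, hM⟩) := hVmeas _
  have hm : MeasurableSpace.comap (U ⟨0, hM⟩) inferInstance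
      ≤ (inferInstance : MeasurableSpace Ω) := hU0.comap_le
  have hU0m' : Measurable[MeasurableSpace.comap (U ⟨0, hM⟩) inferInstance] (U ⟨0, hM⟩) :=
    Measurable.of_comap_le le_rfl
  -- boundedness of v ∘ U0
  have hvU0bd : ∀ᵐ ω ∂P, |v (U ⟨0, hM⟩ ω)| ≤ A := by
    have h1 : ∀ᵐ z ∂(Measure.map (U ⟨0, hM⟩) P), |v z| ≤ A := hlaw ▸ hA
    exact (MeasureTheory.ae_map_iff hU0.aemeasurable
      (measurableSet_le hvmeas.abs measurable_const)).mp h1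
  have hA0 : (0:ℝ) ≤ A := by
    obtain ⟨z, hz⟩ := hA.exists
    exact le_trans (abs_nonneg _) hz
  have hvU0L2 : MemLp (fun ω => v (U ⟨0, hM⟩ ω)) 2 P :=
    MemLp.of_bound ((hvmeas.comp hU0).aestronglyMeasurable) A
      (by filter_upwards [hvU0bd] with ω h; simpa [Real.norm_eq_abs] using h)
  have hvU0int : Integrable (fun ω => v (U ⟨0, hM⟩ ω)) P := hvU0L2.integrable one_le_two
  have hVv : MemLp (fun ω => V ⟨0, hM⟩ ω - v (U ⟨0, hM⟩ ω)) 2 P := hVL2.sub hvU0L2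
  have hg_int : Integrable (fun ω => (V ⟨0, hM⟩ ω - v (U ⟨0, hM⟩ ω))^2) P := hVv.integrable_sq
  have hg_meas : Measurable (fun ω => (V ⟨0, hM⟩ ω - v (U ⟨0, hM⟩ ω))^2) :=
    (hV0.sub (hvmeas.comp hU0)).pow_const 2
  -- conditional expectation of the residual is zero
  have hcond0 : P[(fun ω => V ⟨0, hM⟩ ω - v (U ⟨0, hM⟩ ω)) |
      MeasurableSpace.comap (U ⟨0, hM⟩) inferInstance] =ᵐ[P] fun _ => (0:ℝ) := by
    have hfeq : (fun ω => V ⟨0, hM⟩ ω - v (U ⟨0, hM⟩ ω))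
        = V ⟨0, hM⟩ - fun ω => v (U ⟨0, hM⟩ ω) := rfl
    rw [hfeq]
    have hsub := condExp_sub (m := MeasurableSpace.comap (U ⟨0, hM⟩) inferInstance)
      (μ := P) (f := V ⟨0, hM⟩) (g := fun ω => v (U ⟨0, hM⟩ ω))
      (hVL2.integrable one_le_two) hvU0int
    have hv' : P[(fun ω => v (U ⟨0, hM⟩ ω)) |
        MeasurableSpace.comap (U ⟨0, hM⟩) inferInstance] = fun ω => v (U ⟨0, hM⟩ ω) :=
      condExp_of_stronglyMeasurable hm ((hvmeas.comp hU0m').stronglyMeasurable) hvU0int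
    filter_upwards [hsub, hcond] with ω h1 h2
    rw [h1, Pi.sub_apply, h2, hv', sub_self]
  -- L² of the basis composed with U0
  have hΨL2 : ∀ k, MemLp (fun ω => ψ k (U ⟨0, hM⟩ ω)) 2 P := by
    intro k
    have h1 : MemLp (ψ k) 2 (Measure.map (U ⟨0, hM⟩) P) := by rw [hlaw]; exact hψL2 k
    exact (memLp_map_measure_iff
      (by rw [hlaw]; exact (hψmeas k).aestronglyMeasurable) hU0.aemeasurable).mp h1
  have hΨ2int : ∀ k, Integrable (fun ω => (ψ k (U ⟨0, hM⟩ ω))^2) P :=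
    fun k => (hΨL2 k).integrable_sq
  have hIψ : ∀ k, ∫ ω, (ψ k (U ⟨0, hM⟩ ω))^2 ∂P = G k k := by
    intro k
    have h1 : G k k = ∫ ω, ψ k (U ⟨0, hM⟩ ω) * ψ k (U ⟨0, hM⟩ ω) ∂P := by
      rw [hGdef, ← hlaw, integral_map hU0.aemeasurable
        (by rw [hlaw]; exact ((hψmeas k).mul (hψmeas k)).aestronglyMeasurable)]
    rw [h1]
    exact integral_congr_ae (Filter.Eventually.of_forall fun ω => by simp [pow_two])
  have hGkk0 : ∀ k, 0 ≤ G k k := fun k => (hIψ k) ▸ integral_nonneg fun ω => sq_nonneg _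
  -- the key conditional-variance bound
  have hbound : ∀ k, Integrable
        (fun ω => (ψ k (U ⟨0, hM⟩ ω))^2 * (V ⟨0, hM⟩ ω - v (U ⟨0, hM⟩ ω))^2) P
      ∧ ∫ ω, (ψ k (U ⟨0, hM⟩ ω))^2 * (V ⟨0, hM⟩ ω - v (U ⟨0, hM⟩ ω))^2 ∂P
        ≤ σ^2 * G k k := by
    intro k
    have h := aux_condexp_bound hm (sq_nonneg σ)
      (((hψmeas k).comp hU0m').pow_const 2) (((hψmeas k).comp hU0).pow_const 2)
      (fun ω => sq_nonneg _) (hΨ2int k) hg_meas (fun ω => sq_nonneg _) hg_int hσ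
    exact ⟨h.1, by rw [← hIψ k]; exact h.2⟩
  -- integrability of the cross term
  have hfhint : ∀ k, Integrable (fun ω =>
      ((ψ k (U ⟨0, hM⟩ ω))^2 * v (U ⟨0, hM⟩ ω)) * (V ⟨0, hM⟩ ω - v (U ⟨0, hM⟩ ω))) P := by
    intro k
    refine Integrable.mono' ((((hbound k).1.add (hΨ2int k)).const_mul A).div_const 2) ?_ ?_
    · exact (((((hψmeas k).comp hU0).pow_const 2).mul (hvmeas.comp hU0)).mul
        (hV0.sub (hvmeas.comp hU0))).aestronglyMeasurable
    · filter_upwards [hvU0bd] with ω hv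
      have hq : ‖(ψ k (U ⟨0, hM⟩ ω))^2 * v (U ⟨0, hM⟩ ω) *
          (V ⟨0, hM⟩ ω - v (U ⟨0, hM⟩ ω))‖
          = (ψ k (U ⟨0, hM⟩ ω))^2 * |v (U ⟨0, hM⟩ ω)| * |V ⟨0, hM⟩ ω - v (U ⟨0, hM⟩ ω)| := by
        rw [Real.norm_eq_abs, abs_mul, abs_mul, abs_of_nonneg (sq_nonneg _)]
      rw [hq]
      have h1 : (0:ℝ) ≤ (ψ k (U ⟨0, hM⟩ ω))^2 := sq_nonneg _
      have h2 : (0:ℝ) ≤ |V ⟨0, hM⟩ ω - v (U ⟨0, hM⟩ ω)| := abs_nonneg _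
      have h3 := sq_abs (V ⟨0, hM⟩ ω - v (U ⟨0, hM⟩ ω))
      simp only [Pi.add_apply]
      rw [← h3]
      nlinarith [mul_nonneg (mul_nonneg (sub_nonneg.mpr hv) h1) h2,
        mul_nonneg (mul_nonneg hA0 h1) (sq_nonneg (|V ⟨0, hM⟩ ω - v (U ⟨0, hM⟩ ω)| - 1)),
        mul_nonneg h1 h2]
  -- cross terms vanish
  have hcross : ∀ k, ∫ ω,
      ((ψ k (U ⟨0, hM⟩ ω))^2 * v (U ⟨0, hM⟩ ω)) * (V ⟨0, hM⟩ ω - v (U ⟨0, hM⟩ ω)) ∂P = 0 :=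
    fun k => aux_cross_zero hm
      (((((hψmeas k).comp hU0m').pow_const 2).mul (hvmeas.comp hU0m')).stronglyMeasurable)
      (hfhint k) (hVv.integrable one_le_two) hcond0
  have hcross2 : ∀ k, ∫ ω,
      ψ k (U ⟨0, hM⟩ ω) * (V ⟨0, hM⟩ ω - v (U ⟨0, hM⟩ ω)) ∂P = 0 :=
    fun k => aux_cross_zero hm (((hψmeas k).comp hU0m').stronglyMeasurable)
      (aux_integrable_mul (hΨL2 k) hVv) (hVv.integrable one_le_two) hcond0
  have hψvint : ∀ k, Integrable (fun ω => ψ k (U ⟨0, hM⟩ ω) * v (U ⟨0, hM⟩ ω)) P :=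
    fun k => aux_integrable_mul (hΨL2 k) hvU0L2
  -- mean of ψ_k(U⁰)V⁰ is α_k
  have hEX0 : ∀ k, ∫ ω, ψ k (U ⟨0, hM⟩ ω) * V ⟨0, hM⟩ ω ∂P = α k := by
    intro k
    have hsplit : (fun ω => ψ k (U ⟨0, hM⟩ ω) * V ⟨0, hM⟩ ω)
        = fun ω => ψ k (U ⟨0, hM⟩ ω) * v (U ⟨0, hM⟩ ω)
          + ψ k (U ⟨0, hM⟩ ω) * (V ⟨0, hM⟩ ω - v (U ⟨0, hM⟩ ω)) := funext fun ω => by ring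
    rw [hsplit, integral_add (hψvint k) (aux_integrable_mul (hΨL2 k) hVv), hcross2 k, add_zero]
    rw [hα, ← hlaw, integral_map hU0.aemeasurable
      (by rw [hlaw]; exact ((hψmeas k).mul hvmeas).aestronglyMeasurable)]
  -- second moment bounds
  have hψ2v2int : ∀ k, Integrable
      (fun ω => (ψ k (U ⟨0, hM⟩ ω))^2 * (v (U ⟨0, hM⟩ ω))^2) P := by
    intro k
    refine Integrable.mono' ((hΨ2int k).const_mul (A^2)) ?_ ?_
    · exact ((((hψmeas k).comp hU0).pow_const 2).mul
        ((hvmeas.comp hU0).pow_const 2)).aestronglyMeasurable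
    · filter_upwards [hvU0bd] with ω hv
      rw [Real.norm_eq_abs, abs_of_nonneg (by positivity)]
      nlinarith [sq_abs (v (U ⟨0, hM⟩ ω)), sq_nonneg (ψ k (U ⟨0, hM⟩ ω)),
        mul_nonneg (sub_nonneg.mpr hv) (add_nonneg hA0 (abs_nonneg (v (U ⟨0, hM⟩ ω)))),
        mul_nonneg (mul_nonneg (sub_nonneg.mpr hv) (add_nonneg hA0 (abs_nonneg (v (U ⟨0, hM⟩ ω))))) (sq_nonneg (ψ k (U ⟨0, hM⟩ ω)))]
  have hEψ2v2 : ∀ k, ∫ ω, (ψ k (U ⟨0, hM⟩ ω))^2 * (v (U ⟨0, hM⟩ ω))^2 ∂P ≤ A^2 * G k k := by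
    intro k
    calc ∫ ω, (ψ k (U ⟨0, hM⟩ ω))^2 * (v (U ⟨0, hM⟩ ω))^2 ∂P
        ≤ ∫ ω, A^2 * (ψ k (U ⟨0, hM⟩ ω))^2 ∂P := by
          refine integral_mono_ae (hψ2v2int k) ((hΨ2int k).const_mul _) ?_
          filter_upwards [hvU0bd] with ω hv
          nlinarith [sq_abs (v (U ⟨0, hM⟩ ω)), sq_nonneg (ψ k (U ⟨0, hM⟩ ω)),
        mul_nonneg (sub_nonneg.mpr hv) (add_nonneg hA0 (abs_nonneg (v (U ⟨0, hM⟩ ω)))),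
        mul_nonneg (mul_nonneg (sub_nonneg.mpr hv) (add_nonneg hA0 (abs_nonneg (v (U ⟨0, hM⟩ ω))))) (sq_nonneg (ψ k (U ⟨0, hM⟩ ω)))]
      _ = A^2 * G k k := by rw [integral_const_mul, hIψ k]
  have hX0sq_int : ∀ k, Integrable (fun ω => (ψ k (U ⟨0, hM⟩ ω) * V ⟨0, hM⟩ ω)^2) P := by
    intro k
    refine (((hbound k).1.add ((hfhint k).const_mul 2)).add (hψ2v2int k)).congr
      (Filter.Eventually.of_forall fun ω => by simp only [Pi.add_apply]; ring)
  have hX0L2 : ∀ k, MemLp (fun ω => ψ k (U ⟨0, hM⟩ ω) * V ⟨0, hM⟩ ω) 2 P := fun k =>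
    (memLp_two_iff_integrable_sq (((hψmeas k).comp hU0).mul hV0).aestronglyMeasurable).mpr
      (hX0sq_int k)
  have hEX0sq : ∀ k, ∫ ω, (ψ k (U ⟨0, hM⟩ ω) * V ⟨0, hM⟩ ω)^2 ∂P
      ≤ (σ^2 + A^2) * G k k := by
    intro k
    have hfeq : (fun ω => (ψ k (U ⟨0, hM⟩ ω) * V ⟨0, hM⟩ ω)^2)
        = fun ω => ((ψ k (U ⟨0, hM⟩ ω))^2 * (V ⟨0, hM⟩ ω - v (U ⟨0, hM⟩ ω))^2
            + 2 * (((ψ k (U ⟨0, hM⟩ ω))^2 * v (U ⟨0, hM⟩ ω))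
              * (V ⟨0, hM⟩ ω - v (U ⟨0, hM⟩ ω))))
          + (ψ k (U ⟨0, hM⟩ ω))^2 * (v (U ⟨0, hM⟩ ω))^2 := funext fun ω => by ring
    have hi1 : Integrable (fun ω => (ψ k (U ⟨0, hM⟩ ω))^2 * (V ⟨0, hM⟩ ω - v (U ⟨0, hM⟩ ω))^2
        + 2 * (((ψ k (U ⟨0, hM⟩ ω))^2 * v (U ⟨0, hM⟩ ω))
          * (V ⟨0, hM⟩ ω - v (U ⟨0, hM⟩ ω)))) P :=
      (hbound k).1.add ((hfhint k).const_mul 2)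
    rw [hfeq, integral_add hi1 (hψ2v2int k),
      integral_add (hbound k).1 ((hfhint k).const_mul 2), integral_const_mul 2,
      hcross k, mul_zero, add_zero, add_mul]
    exact add_le_add (hbound k).2 (hEψ2v2 k)
  -- identical distribution of the summands
  have hφmeas : ∀ k, Measurable (fun p : (Fin n → ℝ) × ℝ => ψ k p.1 * p.2) :=
    fun k => ((hψmeas k).comp measurable_fst).mul measurable_snd
  have identX : ∀ (k : Fin K) (m : Fin M), IdentDistrib (fun ω => ψ k (U m ω) * V m ω)
      (fun ω => ψ k (U ⟨0, hM⟩ ω) * V ⟨0, hM⟩ ω) P P :=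
    fun k m => (hident m).comp (hφmeas k)
  have hXmL2 : ∀ (k : Fin K) (m : Fin M), MemLp (fun ω => ψ k (U m ω) * V m ω) 2 P :=
    fun k m => (identX k m).symm.memLp_snd (hX0L2 k)
  have hXmint : ∀ (k : Fin K) (m : Fin M), Integrable (fun ω => ψ k (U m ω) * V m ω) P :=
    fun k m => (hXmL2 k m).integrable one_le_two
  have hβL2 : ∀ k, MemLp (fun ω => (M:ℝ)⁻¹ * ∑ m, ψ k (U m ω) * V m ω) 2 P := by
    intro k
    have hs := memLp_finset_sum (μ := P) (p := 2) Finset.univ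
      (f := fun (m : Fin M) ω => ψ k (U m ω) * V m ω) (fun m _ => hXmL2 k m)
    exact hs.const_mul _
  have hEβ : ∀ k, ∫ ω, (M:ℝ)⁻¹ * ∑ m, ψ k (U m ω) * V m ω ∂P = α k := by
    intro k
    rw [integral_const_mul, integral_finset_sum _ (fun m _ => hXmint k m),
      Finset.sum_congr rfl (fun m _ => ((identX k m).integral_eq).trans (hEX0 k)),
      Finset.sum_const, Finset.card_univ, Fintype.card_fin, nsmul_eq_mul]
    field_simp
  have hVar : ∀ k, variance (fun ω => (M:ℝ)⁻¹ * ∑ m, ψ k (U m ω) * V m ω) P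
      = ∫ ω, ((M:ℝ)⁻¹ * ∑ m, ψ k (U m ω) * V m ω - α k)^2 ∂P := by
    intro k
    rw [variance_eq_integral (hβL2 k).aemeasurable, hEβ k]
  have hβsubint : ∀ k, Integrable
      (fun ω => ((M:ℝ)⁻¹ * ∑ m, ψ k (U m ω) * V m ω - α k)^2) P :=
    fun k => ((hβL2 k).sub (memLp_const (α k))).integrable_sq
  -- Part 1
  have part1 : ∫ ω, (∫ z, (vtil ω z - vK z)^2 ∂μ) ∂P
      ≤ lmin⁻¹ * ∑ k : Fin K,
          variance (fun ω => (M:ℝ)⁻¹ * ∑ m, ψ k (U m ω) * V m ω) P := by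
    have pt : ∀ ω, ∫ z, (vtil ω z - vK z)^2 ∂μ
        ≤ lmin⁻¹ * ∑ k, ((M:ℝ)⁻¹ * ∑ m, ψ k (U m ω) * V m ω - α k)^2 := by
      intro ω
      have hdz : ∀ z, vtil ω z - vK z = ∑ k, (γ ω k - G⁻¹.mulVec α k) * ψ k z := by
        intro z; rw [hvtil, hvK, ← Finset.sum_sub_distrib]
        exact Finset.sum_congr rfl fun k _ => by ring
      have hd2 : (fun k => γ ω k - G⁻¹.mulVec α k)
          = G⁻¹.mulVec (fun k => (M:ℝ)⁻¹ * ∑ m, ψ k (U m ω) * V m ω - α k) := by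
        have h1 : γ ω = G⁻¹.mulVec (fun k => (M:ℝ)⁻¹ * ∑ m, ψ k (U m ω) * V m ω) := by
          rw [hγ ω, ← Matrix.mulVec_smul]
          rfl
        have h2 : (fun k => (M:ℝ)⁻¹ * ∑ m, ψ k (U m ω) * V m ω - α k)
            = (fun k => (M:ℝ)⁻¹ * ∑ m, ψ k (U m ω) * V m ω) - α := rfl
        funext k
        rw [h1, h2, Matrix.mulVec_sub]
        simp [Pi.sub_apply]
      have hGx : G.mulVec (G⁻¹.mulVec
          (fun k => (M:ℝ)⁻¹ * ∑ m, ψ k (U m ω) * V m ω - α k))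
          = fun k => (M:ℝ)⁻¹ * ∑ m, ψ k (U m ω) * V m ω - α k := by
        rw [Matrix.mulVec_mulVec, Matrix.mul_nonsing_inv _ hGinv, Matrix.one_mulVec]
      have e := aux_gram μ ψ hψL2 G hGdef (fun k => γ ω k - G⁻¹.mulVec α k)
      have hq := aux_quad G lmin hlmin (fun y => (hquad y).1)
        (G⁻¹.mulVec (fun k => (M:ℝ)⁻¹ * ∑ m, ψ k (U m ω) * V m ω - α k))
      rw [hGx] at hq
      calc ∫ z, (vtil ω z - vK z)^2 ∂μ
          = (fun k => γ ω k - G⁻¹.mulVec α k) ⬝ᵥ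
              G.mulVec (fun k => γ ω k - G⁻¹.mulVec α k) := by simp_rw [hdz]; exact e
        _ ≤ lmin⁻¹ * ∑ k, ((M:ℝ)⁻¹ * ∑ m, ψ k (U m ω) * V m ω - α k)^2 := by
            rw [hd2, hGx]; exact hq
    refine (integral_mono_of_nonneg
      (Filter.Eventually.of_forall fun ω => integral_nonneg fun z => sq_nonneg _)
      ((integrable_finset_sum _ fun k _ => hβsubint k).const_mul _)
      (Filter.Eventually.of_forall pt)).trans_eq ?_
    rw [integral_const_mul, integral_finset_sum _ fun k _ => hβsubint k]
    congr 1
    exact Finset.sum_congr rfl fun k _ => (hVar k).symm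
  -- Part 2
  have hGkk_le : ∀ k, G k k ≤ lmax := by
    intro k
    have h := (hquad (Pi.single (M := fun _ => ℝ) k 1)).2
    have h1 : Pi.single (M := fun _ => ℝ) k 1 ⬝ᵥ G.mulVec (Pi.single (M := fun _ => ℝ) k 1) = G k k := by
      simp [dotProduct, Matrix.mulVec, Pi.single_apply]
    have h2 : ∑ j, (Pi.single (M := fun _ => ℝ) k 1 j)^2 = 1 := by
      simp [Pi.single_apply, sq, Finset.sum_ite_eq']
    rw [h1, h2, mul_one] at h
    exact h
  have hσA : (0:ℝ) ≤ σ^2 + A^2 := by positivity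
  have hindepX : ∀ k, iIndepFun
      (fun m ω => ψ k (U m ω) * V m ω) P :=
    fun k => hindep.comp (fun _ p => ψ k p.1 * p.2) (fun _ => hφmeas k)
  have hvark : ∀ k, variance (fun ω => (M:ℝ)⁻¹ * ∑ m, ψ k (U m ω) * V m ω) P
      ≤ (σ^2 + A^2) * lmax / M := by
    intro k
    have h0 : variance (fun ω => (M:ℝ)⁻¹ * ∑ m, ψ k (U m ω) * V m ω) P
        = ((M:ℝ)⁻¹)^2 * variance (fun ω => ∑ m, ψ k (U m ω) * V m ω) P :=
      variance_const_mul _ _ _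
    have hre : (fun ω => ∑ m, ψ k (U m ω) * V m ω)
        = ∑ m : Fin M, (fun ω => ψ k (U m ω) * V m ω) := by funext ω; simp
    have hsum : variance (fun ω => ∑ m, ψ k (U m ω) * V m ω) P
        = ∑ m : Fin M, variance (fun ω => ψ k (U m ω) * V m ω) P := by
      rw [hre]
      exact IndepFun.variance_sum (fun m _ => hXmL2 k m)
        (fun i _ j _ hij => (hindepX k).indepFun hij)
    have hv0 : variance (fun ω => ψ k (U ⟨0, hM⟩ ω) * V ⟨0, hM⟩ ω) P
        ≤ (σ^2 + A^2) * lmax := by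
      have h1 := variance_le_expectation_sq (μ := P)
        (((hψmeas k).comp hU0).mul hV0).aestronglyMeasurable
      have h2 : P[(fun ω => ψ k (U ⟨0, hM⟩ ω) * V ⟨0, hM⟩ ω) ^ 2]
          = ∫ ω, (ψ k (U ⟨0, hM⟩ ω) * V ⟨0, hM⟩ ω)^2 ∂P :=
        integral_congr_ae (Filter.Eventually.of_forall fun ω => by simp [Pi.pow_apply])
      calc variance (fun ω => ψ k (U ⟨0, hM⟩ ω) * V ⟨0, hM⟩ ω) P
          ≤ ∫ ω, (ψ k (U ⟨0, hM⟩ ω) * V ⟨0, hM⟩ ω)^2 ∂P := h2 ▸ h1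
        _ ≤ (σ^2 + A^2) * G k k := hEX0sq k
        _ ≤ (σ^2 + A^2) * lmax := mul_le_mul_of_nonneg_left (hGkk_le k) hσA
    calc variance (fun ω => (M:ℝ)⁻¹ * ∑ m, ψ k (U m ω) * V m ω) P
        = ((M:ℝ)⁻¹)^2 * ∑ m : Fin M, variance (fun ω => ψ k (U m ω) * V m ω) P := by
          rw [h0, hsum]
      _ = ((M:ℝ)⁻¹)^2 * ((M:ℝ) * variance
            (fun ω => ψ k (U ⟨0, hM⟩ ω) * V ⟨0, hM⟩ ω) P) := by
          rw [Finset.sum_congr rfl fun m _ => (identX k m).variance_eq,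
            Finset.sum_const, Finset.card_univ, Fintype.card_fin, nsmul_eq_mul]
      _ ≤ ((M:ℝ)⁻¹)^2 * ((M:ℝ) * ((σ^2 + A^2) * lmax)) := by
          refine mul_le_mul_of_nonneg_left (mul_le_mul_of_nonneg_left hv0 ?_) (by positivity)
          positivity
      _ = (σ^2 + A^2) * lmax / M := by field_simp
  have part2 : lmin⁻¹ * ∑ k : Fin K,
      variance (fun ω => (M:ℝ)⁻¹ * ∑ m, ψ k (U m ω) * V m ω) P
      ≤ (σ^2 + A^2) * lmax * K / (lmin * M) := by
    have hsum : ∑ k : Fin K, variance (fun ω => (M:ℝ)⁻¹ * ∑ m, ψ k (U m ω) * V m ω) P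
        ≤ (K:ℝ) * ((σ^2 + A^2) * lmax / M) := by
      calc ∑ k : Fin K, variance (fun ω => (M:ℝ)⁻¹ * ∑ m, ψ k (U m ω) * V m ω) P
          ≤ ∑ _k : Fin K, (σ^2 + A^2) * lmax / M :=
            Finset.sum_le_sum fun k _ => hvark k
        _ = (K:ℝ) * ((σ^2 + A^2) * lmax / M) := by
            rw [Finset.sum_const, Finset.card_univ, Fintype.card_fin, nsmul_eq_mul]
    calc lmin⁻¹ * ∑ k : Fin K,
        variance (fun ω => (M:ℝ)⁻¹ * ∑ m, ψ k (U m ω) * V m ω) P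
        ≤ lmin⁻¹ * ((K:ℝ) * ((σ^2 + A^2) * lmax / M)) :=
          mul_le_mul_of_nonneg_left hsum (inv_nonneg.mpr hlmin.le)
      _ = (σ^2 + A^2) * lmax * K / (lmin * M) := by field_simp
  exact ⟨part1, part2⟩
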